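/- Let H be an n×n symmetric positive definite matrix, let G ∈ 𝒢_H, and let X = (X_t)_{t∈ℤ} satisfy e^{tH} X_t → 0 in probability as t → −∞ and Δ_t X = (e^{−H} − I) X_{t−1} + Δ_t G for all t ∈ ℤ. Then for every t ∈ ℤ, X_t = e^{−tH} · lim_{l→−∞} Σ_{k=l}^t e^{kH} Δ_k G, where the limit is taken in probability. -/

import Mathlib

set_option autoImplicit false

open MeasureTheory Filter Finset Matrix Topology

variable {Ω : Type*}

/-- Two `ℤ`-indexed `ℝⁿ`-valued processes have the same finite-dimensional
distributions. -/
def SameFDD {n : ℕ} [MeasurableSpace Ω] (μ : Measure Ω)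
    (X Y : ℤ → Ω → (Fin n → ℝ)) : Prop :=
  ∀ (m : ℕ) (t : Fin m → ℤ),
    μ.map (fun ω (i : Fin m) => X (t i) ω) = μ.map (fun ω (i : Fin m) => Y (t i) ω)

/-- Strict stationarity of a `ℤ`-indexed process. -/
def IsStationaryProcess {n : ℕ} [MeasurableSpace Ω] (μ : Measure Ω)
    (X : ℤ → Ω → (Fin n → ℝ)) : Prop :=
  ∀ s : ℤ, SameFDD μ (fun t => X (t + s)) X

/-- Stationarity of increments of a `ℤ`-indexed process. -/
def HasStationaryIncrements {n : ℕ} [MeasurableSpace Ω] (μ : Measure Ω)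
    (G : ℤ → Ω → (Fin n → ℝ)) : Prop :=
  ∀ s : ℤ, SameFDD μ (fun t ω => G (t + s) ω - G s ω) (fun t ω => G t ω - G 0 ω)

/-- The matrix exponential `e^{tH}` for an integer `t`. -/
noncomputable def zexp {n : ℕ} (H : Matrix (Fin n) (Fin n) ℝ) (t : ℤ) :
    Matrix (Fin n) (Fin n) ℝ :=
  NormedSpace.exp ((t : ℝ) • H)

/-- The partial sum `Σ_{k=l}^0 e^{kH} Δ_k G`. -/
noncomputable def partialSumG {n : ℕ} (H : Matrix (Fin n) (Fin n) ℝ)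
    (G : ℤ → Ω → (Fin n → ℝ)) (l : ℤ) (ω : Ω) : Fin n → ℝ :=
  ∑ k ∈ Finset.Icc l 0, (zexp H k).mulVec (G k ω - G (k - 1) ω)

/-- `G ∈ 𝒢_H` : `G` is a stationary-increment process starting from `0` whose partial
sums `Σ_{k=l}^0 e^{kH} Δ_k G` converge in probability as `l → −∞`. -/
def MemG {n : ℕ} [MeasurableSpace Ω] (μ : Measure Ω) (H : Matrix (Fin n) (Fin n) ℝ)
    (G : ℤ → Ω → (Fin n → ℝ)) : Prop :=
  (∀ ω, G 0 ω = 0) ∧ HasStationaryIncrements μ G ∧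
    ∃ ξ : Ω → (Fin n → ℝ), TendstoInMeasure μ (fun l => partialSumG H G l) Filter.atBot ξ

/-- mulVec is Lipschitz, so it preserves convergence in measure. -/
lemma tim_mulVec {n : ℕ} [MeasurableSpace Ω] {μ : Measure Ω} {ι : Type*} {L : Filter ι}
    (A : Matrix (Fin n) (Fin n) ℝ) {f : ι → Ω → Fin n → ℝ} {g : Ω → Fin n → ℝ}
    (h : TendstoInMeasure μ f L g) :
    TendstoInMeasure μ (fun i ω => A.mulVec (f i ω)) L (fun ω => A.mulVec (g ω)) := by
  set T := LinearMap.toContinuousLinearMap (Matrix.mulVecLin A) with hT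
  have hlip : ∀ x y : Fin n → ℝ, dist (A.mulVec x) (A.mulVec y) ≤ (‖T‖ + 1) * dist x y := by
    intro x y
    have h1 : dist (T x) (T y) ≤ ‖T‖ * dist x y := T.lipschitz.dist_le_mul x y
    have h2 : T x = A.mulVec x := rfl
    have h3 : T y = A.mulVec y := rfl
    rw [h2, h3] at h1
    nlinarith [dist_nonneg (x := x) (y := y), norm_nonneg T]
  intro ε hε
  have hC : ((‖T‖₊ : ENNReal) + 1) ≠ ⊤ := by simp
  have hε' : 0 < ε / ((‖T‖₊ : ENNReal) + 1) := ENNReal.div_pos_iff.2 ⟨hε.ne', hC⟩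
  refine tendsto_of_tendsto_of_tendsto_of_le_of_le tendsto_const_nhds (h _ hε')
    (fun i => zero_le) (fun i => measure_mono ?_)
  intro ω hω
  simp only [Set.mem_setOf_eq] at hω ⊢
  have h1 : edist (A.mulVec (f i ω)) (A.mulVec (g ω)) ≤ ‖T‖₊ * edist (f i ω) (g ω) :=
    T.lipschitz.edist_le_mul _ _
  apply ENNReal.div_le_of_le_mul
  calc ε ≤ _ := hω
    _ ≤ ‖T‖₊ * edist (f i ω) (g ω) := h1
    _ ≤ edist (f i ω) (g ω) * (‖T‖₊ + 1) := by
        rw [mul_comm]; exact mul_le_mul' le_rfl le_self_add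

lemma tele {E : Type*} [AddCommGroup E] (F : ℤ → E) (l : ℤ) :
    ∀ t, l ≤ t → ∑ k ∈ Finset.Icc l t, (F k - F (k-1)) = F t - F (l-1) := by
  intro t ht
  obtain ⟨m, rfl⟩ : ∃ m : ℕ, t = l + m := ⟨(t - l).toNat, by omega⟩
  clear ht
  induction m with
  | zero => simp
  | succ m ih =>
    have hins : Finset.Icc l (l + (m+1 : ℕ)) = insert (l + m + 1) (Finset.Icc l (l + m)) := by
      ext x; simp only [Finset.mem_Icc, Finset.mem_insert]; push_cast; omega
    rw [hins, Finset.sum_insert (by simp), ih]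
    have h1 : l + m + 1 - 1 = l + m := by ring
    have h2 : l + ((m:ℤ)+1) = l + m + 1 := by ring
    rw [h1]
    push_cast
    rw [h2]
    abel

/-- if `e^{tH} X_t → 0` in probability as `t → −∞` and
`Δ_t X = (e^{−H} − I) X_{t−1} + Δ_t G` with `G ∈ 𝒢_H`, then for every `t ∈ ℤ`,
`X_t = e^{−tH} · lim_{l→−∞} Σ_{k=l}^t e^{kH} Δ_k G`, the limit being in
probability. -/
theorem stmt6 {n : ℕ} [MeasurableSpace Ω] (μ : Measure Ω) [IsProbabilityMeasure μ]
    (H : Matrix (Fin n) (Fin n) ℝ) (hH : H.PosDef)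
    (X G : ℤ → Ω → (Fin n → ℝ))
    (hmX : ∀ t, Measurable (X t)) (hmG : ∀ t, Measurable (G t))
    (hG : MemG μ H G)
    (hlim : TendstoInMeasure μ (fun t ω => (zexp H t).mulVec (X t ω)) Filter.atBot
      (fun _ => (0 : Fin n → ℝ)))
    (heq : ∀ (t : ℤ) (ω : Ω), X t ω - X (t - 1) ω =
      (NormedSpace.exp (-H) - 1).mulVec (X (t - 1) ω) + (G t ω - G (t - 1) ω)) :
    ∀ t : ℤ, TendstoInMeasure μ
      (fun l ω => (zexp H (-t)).mulVec
        (∑ k ∈ Finset.Icc l t, (zexp H k).mulVec (G k ω - G (k - 1) ω)))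
      Filter.atBot (X t) := by
  intro t
  -- Step 1: single-term identity
  have key : ∀ (k : ℤ) (ω : Ω), (zexp H k).mulVec (G k ω - G (k-1) ω)
      = (zexp H k).mulVec (X k ω) - (zexp H (k-1)).mulVec (X (k-1) ω) := by
    intro k ω
    have h1 := heq k ω
    have hX : G k ω - G (k-1) ω = X k ω - (NormedSpace.exp (-H)).mulVec (X (k-1) ω) := by
      have h2 : (NormedSpace.exp (-H) - 1).mulVec (X (k-1) ω)
          = (NormedSpace.exp (-H)).mulVec (X (k-1) ω) - X (k-1) ω := by
        rw [Matrix.sub_mulVec, Matrix.one_mulVec]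
      rw [h2] at h1
      have := h1
      abel_nf
      abel_nf at this
      linear_combination (norm := abel) -this
    have hc : Commute ((k:ℝ) • H) (-H) := ((Commute.refl H).smul_left _).neg_right
    have h2 := (Matrix.exp_add_of_commute _ _ hc).symm
    rw [show (k:ℝ) • H + -H = ((k-1:ℤ):ℝ) • H by push_cast; module] at h2
    have hmat : zexp H k * NormedSpace.exp (-H) = zexp H (k-1) := h2
    rw [hX, Matrix.mulVec_sub, Matrix.mulVec_mulVec, hmat]
  -- Step 2: the inverse identity e^{-tH} e^{tH} = 1
  have hinv : zexp H (-t) * zexp H t = 1 := by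
    show NormedSpace.exp (((-t:ℤ):ℝ) • H) * NormedSpace.exp ((t:ℝ) • H) = 1
    have hc : Commute (((-t:ℤ):ℝ) • H) ((t:ℝ) • H) :=
      ((Commute.refl H).smul_left _).smul_right _
    have h2 := (Matrix.exp_add_of_commute _ _ hc).symm
    rw [show ((-t:ℤ):ℝ) • H + (t:ℝ) • H = (0:ℝ) • H by push_cast; module, zero_smul,
      NormedSpace.exp_zero] at h2
    exact h2
  -- Step 3: the comparison process
  set v : ℤ → Ω → Fin n → ℝ :=
    fun l ω => (zexp H (-t)).mulVec ((zexp H (l-1)).mulVec (X (l-1) ω)) with hv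
  -- the stated function eventually equals X t - v l
  have hev : ∀ᶠ l in (atBot : Filter ℤ), ∀ ω, X t ω - v l ω
      = (zexp H (-t)).mulVec
        (∑ k ∈ Finset.Icc l t, (zexp H k).mulVec (G k ω - G (k - 1) ω)) := by
    filter_upwards [eventually_le_atBot t] with l hl
    intro ω
    have hsum : ∑ k ∈ Finset.Icc l t, (zexp H k).mulVec (G k ω - G (k - 1) ω)
        = (zexp H t).mulVec (X t ω) - (zexp H (l-1)).mulVec (X (l-1) ω) := by
      rw [Finset.sum_congr rfl (fun k _ => key k ω)]
      exact tele (fun k => (zexp H k).mulVec (X k ω)) l t hl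
    rw [hsum, Matrix.mulVec_sub, Matrix.mulVec_mulVec, hinv, Matrix.one_mulVec]
  -- Step 4: v → 0 in measure
  have hv0 : TendstoInMeasure μ v atBot (fun _ => (0 : Fin n → ℝ)) := by
    have hshift : TendstoInMeasure μ (fun l ω => (zexp H (l-1)).mulVec (X (l-1) ω)) atBot
        (fun _ => (0 : Fin n → ℝ)) := by
      intro ε hε
      exact (hlim ε hε).comp (tendsto_atBot_add_const_right atBot (-1) tendsto_id)
    have h3 := tim_mulVec (zexp H (-t)) hshift
    simp only [Matrix.mulVec_zero] at h3
    exact h3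
  -- Step 5: conclude
  have hfinal : TendstoInMeasure μ (fun l ω => X t ω - v l ω) atBot (X t) := by
    intro ε hε
    have h0 := hv0 ε hε
    convert h0 using 2 with l
    congr 1
    ext ω
    simp only [Set.mem_setOf_eq]
    have hd : X t ω - v l ω - X t ω = -(v l ω) := by abel
    rw [edist_dist, edist_dist, dist_eq_norm, dist_eq_norm, hd, norm_neg, sub_zero]
  intro ε hε
  refine (hfinal ε hε).congr' ?_
  filter_upwards [hev] with l hl
  congr 1
  ext x
  simp only [Set.mem_setOf_eq, hl x]
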